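/- arXiv:0804.0746 — 4 statements merged into one kernel-verified Lean document; each statement's English description precedes it below -/
import Mathlib

section
/- Decomposition of the momentum under H¹ perturbations: if V₀ ∈ Z¹ and w ∈ H¹(ℝ,ℂ), then V₀ + w ∈ Z¹ and 𝒫(V₀ + w) = 𝒫(V₀) + (1/2)∫_ℝ⟨iw, w'⟩ + ∫_ℝ⟨iw, V₀'⟩. -/
open MeasureTheory Filter Set Topology Real

noncomputable section

/-- Real inner product on `ℂ`: `⟨z, w⟩ = Re (z̄ w)`. -/
def rInner (z w : ℂ) : ℝ := ((starRingEnd ℂ) z * w).re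

/-- Membership in the energy space `X¹`. -/
structure InX1 (w : ℝ → ℂ) : Prop where
  bdd : ∃ C, ∀ x, ‖w x‖ ≤ C
  diff : Differentiable ℝ w
  deriv_memL2 : MemLp (deriv w) 2 volume
  gl_memL2 : MemLp (fun x => (1 : ℝ) - ‖w x‖ ^ 2) 2 volume

/-- Membership in `Z¹`: `X¹` together with limits at `±∞`. -/
def InZ1 (w : ℝ → ℂ) : Prop :=
  InX1 w ∧ (∃ l, Tendsto w atTop (nhds l)) ∧ (∃ l, Tendsto w atBot (nhds l))

/-- The Ginzburg-Landau energy. -/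
def energy (w : ℝ → ℂ) : ℝ :=
  (1 / 2) * (∫ x, ‖deriv w x‖ ^ 2) + (1 / 4) * ∫ x, ((1 : ℝ) - ‖w x‖ ^ 2) ^ 2

/-- The black soliton `𝔳₀(x) = tanh (x / √2)`. -/
def blackSoliton (x : ℝ) : ℂ := (Real.tanh (x / Real.sqrt 2) : ℝ)

/-- The truncated momentum `P_R(v) = (1/2) ∫_{-R}^R ⟨iv, v'⟩`. -/
def PR (v : ℝ → ℂ) (R : ℝ) : ℝ :=
  (1 / 2) * ∫ x in (-R)..R, rInner (Complex.I * v x) (deriv v x)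

/-- The quantity whose limit mod `π` defines the untwisted momentum. -/
def upFun (v : ℝ → ℂ) (R : ℝ) : AddCircle (π : ℝ) :=
  ((PR v R - (1 / 2) * (Complex.arg (v R) - Complex.arg (v (-R))) : ℝ) : AddCircle (π : ℝ))

/-- The untwisted momentum `[p](v) ∈ ℝ/πℤ`. -/
def up (v : ℝ → ℂ) : AddCircle (π : ℝ) := limUnder atTop (upFun v)

/-- The momentum `𝒫(v)` as an improper integral. -/
def mom (v : ℝ → ℂ) : ℝ := limUnder atTop (PR v)

/-- The distance `d_{A,X¹}`. -/
def dX1 (A : ℝ) (v₁ v₂ : ℝ → ℂ) : ℝ :=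
  (⨆ x : Icc (-A) A, ‖v₁ x - v₂ x‖)
    + (∫ x, ‖deriv v₁ x - deriv v₂ x‖ ^ 2) ^ (1 / 2 : ℝ)
    + (∫ x, (‖v₁ x‖ - ‖v₂ x‖) ^ 2) ^ (1 / 2 : ℝ)

/-- Membership in `H¹(ℝ, ℂ)`. -/
structure MemH1 (w : ℝ → ℂ) : Prop where
  diff : Differentiable ℝ w
  memL2 : MemLp w 2 volume
  deriv_memL2 : MemLp (deriv w) 2 volume

/-- `Ψ : ℝ → ℝ → ℂ` (time then space) solves the Gross-Pitaevskii equation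
`i ∂_t Ψ + ∂_xx Ψ = Ψ (|Ψ|² - 1)`. -/
def IsGPSolution (Ψ : ℝ → ℝ → ℂ) : Prop :=
  ∀ t x, Complex.I * deriv (fun s => Ψ s x) t + deriv (deriv (Ψ t)) x
    = Ψ t x * ((‖Ψ t x‖ ^ 2 - 1 : ℝ) : ℂ)

/-- Continuity of `t ↦ Ψ(·, t) - Ψ(·, t₀)` into `H¹(ℝ)`. -/
def H1ContinuousFlow (Ψ : ℝ → ℝ → ℂ) : Prop :=
  ∀ t₀ : ℝ, Tendsto (fun t => eLpNorm (fun x => Ψ t x - Ψ t₀ x) 2 volume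
    + eLpNorm (fun x => deriv (Ψ t) x - deriv (Ψ t₀) x) 2 volume) (nhds t₀) (nhds 0)

section AuxLemmas

open Complex MeasureTheory Filter Set Topology
open scoped ENNReal

lemma rInner_eq (z w : ℂ) : rInner z w = z.re * w.re + z.im * w.im := by
  simp [rInner, Complex.mul_re]

lemma abs_rInner_le (z w : ℂ) : |rInner z w| ≤ 2 * (‖z‖ * ‖w‖) := by
  rw [rInner_eq]
  have h1 : |z.re * w.re| ≤ ‖z‖ * ‖w‖ := by
    rw [abs_mul]
    exact mul_le_mul (Complex.abs_re_le_norm z) (Complex.abs_re_le_norm w) (abs_nonneg _)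
      (norm_nonneg _)
  have h2 : |z.im * w.im| ≤ ‖z‖ * ‖w‖ := by
    rw [abs_mul]
    exact mul_le_mul (Complex.abs_im_le_norm z) (Complex.abs_im_le_norm w) (abs_nonneg _)
      (norm_nonneg _)
  calc |z.re * w.re + z.im * w.im| ≤ |z.re * w.re| + |z.im * w.im| := abs_add_le _ _
    _ ≤ ‖z‖ * ‖w‖ + ‖z‖ * ‖w‖ := add_le_add h1 h2
    _ = 2 * (‖z‖ * ‖w‖) := by ring

lemma norm_sq_eq' (z : ℂ) : ‖z‖ ^ 2 = z.re * z.re + z.im * z.im := by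
  rw [Complex.sq_norm, Complex.normSq_apply]

lemma aesm_rInner {f g : ℝ → ℂ} (hf : AEStronglyMeasurable f volume)
    (hg : AEStronglyMeasurable g volume) :
    AEStronglyMeasurable (fun x => rInner (f x) (g x)) volume := by
  simp only [rInner_eq]
  exact ((Complex.continuous_re.comp_aestronglyMeasurable hf).mul
      (Complex.continuous_re.comp_aestronglyMeasurable hg)).add
    ((Complex.continuous_im.comp_aestronglyMeasurable hf).mul
      (Complex.continuous_im.comp_aestronglyMeasurable hg))

lemma integrable_rInner {f g : ℝ → ℂ} (hf : MemLp f 2 volume) (hg : MemLp g 2 volume) :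
    Integrable (fun x => rInner (f x) (g x)) volume := by
  have hmul : Integrable (fun x => ‖f x‖ * ‖g x‖) volume := by
    have h121 : (1 : ℝ≥0∞) / 1 = 1 / 2 + 1 / 2 := by
      rw [ENNReal.add_halves]; norm_num
    have h := MemLp.smul (r := 1) (hg.norm) (hf.norm)
    rw [memLp_one_iff_integrable] at h
    simpa [Pi.smul_apply, smul_eq_mul, Pi.mul_def] using h
  refine (hmul.const_mul 2).mono' (aesm_rInner hf.1 hg.1)
    (Eventually.of_forall fun x => ?_)
  rw [Real.norm_eq_abs, ← mul_assoc]
  calc |rInner (f x) (g x)| ≤ 2 * (‖f x‖ * ‖g x‖) := abs_rInner_le _ _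
    _ = 2 * ‖f x‖ * ‖g x‖ := by ring

lemma memL2_intervalIntegrable {f : ℝ → ℝ} (hf : MemLp f 2 volume) (a b : ℝ) :
    IntervalIntegrable f volume a b := by
  rw [intervalIntegrable_iff]
  haveI : IsFiniteMeasure (volume.restrict (Set.uIoc a b)) := by
    constructor
    rw [Measure.restrict_apply_univ]
    exact lt_of_le_of_lt (measure_mono Set.uIoc_subset_uIcc) isCompact_uIcc.measure_lt_top
  exact (hf.restrict _).integrable one_le_two

lemma memL2_rInner_bdd {f g : ℝ → ℂ} {C : ℝ} (hfc : AEStronglyMeasurable f volume)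
    (hfb : ∀ x, ‖f x‖ ≤ C) (hg : MemLp g 2 volume) :
    MemLp (fun x => rInner (f x) (g x)) 2 volume := by
  have hC0 : 0 ≤ C := le_trans (norm_nonneg _) (hfb 0)
  refine MemLp.of_le (hg.norm.const_mul (2 * C)) (aesm_rInner hfc hg.1)
    (Eventually.of_forall fun x => ?_)
  rw [Real.norm_eq_abs, Real.norm_eq_abs,
    _root_.abs_of_nonneg (mul_nonneg (by linarith) (norm_nonneg _))]
  calc |rInner (f x) (g x)| ≤ 2 * (‖f x‖ * ‖g x‖) := abs_rInner_le _ _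
    _ ≤ 2 * C * ‖g x‖ := by nlinarith [hfb x, norm_nonneg (g x), norm_nonneg (f x)]

lemma HasDerivAt.cre {f : ℝ → ℂ} {f' : ℂ} {x : ℝ} (h : HasDerivAt f f' x) :
    HasDerivAt (fun y => (f y).re) f'.re x := by
  exact (Complex.reCLM.hasFDerivAt.comp_hasDerivAt x h :)

lemma HasDerivAt.cim {f : ℝ → ℂ} {f' : ℂ} {x : ℝ} (h : HasDerivAt f f' x) :
    HasDerivAt (fun y => (f y).im) f'.im x := by
  exact (Complex.imCLM.hasFDerivAt.comp_hasDerivAt x h :)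

lemma hasDerivAt_normSq' {w : ℝ → ℂ} (hw : Differentiable ℝ w) (x : ℝ) :
    HasDerivAt (fun y => ‖w y‖ ^ 2) (2 * rInner (w x) (deriv w x)) x := by
  have h := (hw x).hasDerivAt
  have key := (h.cre.mul h.cre).add (h.cim.mul h.cim)
  have hfun : (fun y => ‖w y‖ ^ 2)
      = fun y => (w y).re * (w y).re + (w y).im * (w y).im := by
    funext y; exact norm_sq_eq' _
  rw [hfun]
  refine key.congr_deriv ?_
  rw [rInner_eq]; ring

lemma hasDerivAt_cross {v w : ℝ → ℂ} (hv : Differentiable ℝ v) (hw : Differentiable ℝ w)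
    (x : ℝ) :
    HasDerivAt (fun y => rInner (Complex.I * v y) (w y))
      (rInner (Complex.I * v x) (deriv w x) - rInner (Complex.I * w x) (deriv v x)) x := by
  have hv' := (hv x).hasDerivAt
  have hw' := (hw x).hasDerivAt
  have key := (hv'.cre.mul hw'.cim).sub (hv'.cim.mul hw'.cre)
  have hfun : (fun y => rInner (Complex.I * v y) (w y))
      = fun y => (v y).re * (w y).im - (v y).im * (w y).re := by
    funext y
    simp only [rInner_eq, Complex.mul_re, Complex.mul_im, Complex.I_re, Complex.I_im]
    ring
  rw [hfun]
  refine key.congr_deriv ?_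
  simp only [rInner_eq, Complex.mul_re, Complex.mul_im, Complex.I_re, Complex.I_im]
  ring

lemma integrand_expand (a b c d : ℂ) :
    rInner (Complex.I * (a + b)) (c + d)
      = rInner (Complex.I * a) c + rInner (Complex.I * b) d
        + rInner (Complex.I * b) c + rInner (Complex.I * a) d := by
  simp only [rInner_eq, Complex.mul_re, Complex.mul_im, Complex.add_re, Complex.add_im,
    Complex.I_re, Complex.I_im]
  ring

lemma tendsto_of_deriv_integrable_atTop {f : ℝ → ℝ} (hf : Differentiable ℝ f)
    (hi : Integrable (deriv f) volume) :
    Tendsto f atTop (𝓝 (f 0 + ∫ x in Ioi (0 : ℝ), deriv f x)) := by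
  have key : ∀ b : ℝ, f 0 + ∫ x in (0 : ℝ)..b, deriv f x = f b := fun b => by
    rw [intervalIntegral.integral_deriv_eq_sub (fun x _ => hf x) hi.intervalIntegrable]
    ring
  have h := MeasureTheory.intervalIntegral_tendsto_integral_Ioi 0 hi.integrableOn tendsto_id
  exact (tendsto_const_nhds.add h).congr key

lemma tendsto_of_deriv_integrable_atBot {f : ℝ → ℝ} (hf : Differentiable ℝ f)
    (hi : Integrable (deriv f) volume) :
    Tendsto f atBot (𝓝 (f 0 - ∫ x in Iic (0 : ℝ), deriv f x)) := by
  have key : ∀ a : ℝ, f 0 - ∫ x in a..(0 : ℝ), deriv f x = f a := fun a => by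
    rw [intervalIntegral.integral_deriv_eq_sub (fun x _ => hf x) hi.intervalIntegrable]
    ring
  have h := MeasureTheory.intervalIntegral_tendsto_integral_Iic 0 hi.integrableOn tendsto_id
  exact (tendsto_const_nhds.sub h).congr key

lemma limit_eq_zero_atTop {g : ℝ → ℝ} (hg : Integrable g volume) (h0 : ∀ x, 0 ≤ g x)
    {L : ℝ} (hL : Tendsto g atTop (𝓝 L)) : L = 0 := by
  by_contra hne
  have hLnn : 0 ≤ L := ge_of_tendsto hL (Eventually.of_forall h0)
  have hLpos : 0 < L := lt_of_le_of_ne hLnn (Ne.symm hne)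
  obtain ⟨M, hM⟩ := eventually_atTop.mp (hL.eventually_const_lt (by linarith : L / 2 < L))
  have hsub : Ici M ⊆ {x | L / 2 ≤ g x} := fun x hx => (hM x hx).le
  have hfin := hg.measure_ge_lt_top (by linarith : (0 : ℝ) < L / 2)
  have hmono : (volume : Measure ℝ) (Ici M) ≤ volume {x | L / 2 ≤ g x} := measure_mono hsub
  rw [Real.volume_Ici] at hmono
  exact absurd (lt_of_le_of_lt hmono hfin) (lt_irrefl _)

lemma limit_eq_zero_atBot {g : ℝ → ℝ} (hg : Integrable g volume) (h0 : ∀ x, 0 ≤ g x)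
    {L : ℝ} (hL : Tendsto g atBot (𝓝 L)) : L = 0 := by
  by_contra hne
  have hLnn : 0 ≤ L := ge_of_tendsto hL (Eventually.of_forall h0)
  have hLpos : 0 < L := lt_of_le_of_ne hLnn (Ne.symm hne)
  obtain ⟨M, hM⟩ := eventually_atBot.mp (hL.eventually_const_lt (by linarith : L / 2 < L))
  have hsub : Iic M ⊆ {x | L / 2 ≤ g x} := fun x hx => (hM x hx).le
  have hfin := hg.measure_ge_lt_top (by linarith : (0 : ℝ) < L / 2)
  have hmono : (volume : Measure ℝ) (Iic M) ≤ volume {x | L / 2 ≤ g x} := measure_mono hsub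
  rw [Real.volume_Iic] at hmono
  exact absurd (lt_of_le_of_lt hmono hfin) (lt_irrefl _)

lemma MemH1.tendsto_zero {w : ℝ → ℂ} (hw : MemH1 w) :
    Tendsto w atTop (𝓝 0) ∧ Tendsto w atBot (𝓝 0) := by
  have hgd : ∀ x, HasDerivAt (fun y => ‖w y‖ ^ 2) (2 * rInner (w x) (deriv w x)) x :=
    hasDerivAt_normSq' hw.diff
  have hgdiff : Differentiable ℝ (fun y => ‖w y‖ ^ 2) := fun x => (hgd x).differentiableAt
  have hderiv_eq : deriv (fun y => ‖w y‖ ^ 2) = fun x => 2 * rInner (w x) (deriv w x) :=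
    funext fun x => (hgd x).deriv
  have hint : Integrable (deriv (fun y => ‖w y‖ ^ 2)) volume := by
    rw [hderiv_eq]
    exact (integrable_rInner hw.memL2 hw.deriv_memL2).const_mul 2
  have hgint : Integrable (fun y => ‖w y‖ ^ 2) volume := by
    refine (integrable_rInner hw.memL2 hw.memL2).congr (Eventually.of_forall fun x => ?_)
    show rInner (w x) (w x) = ‖w x‖ ^ 2
    rw [rInner_eq]
    exact (norm_sq_eq' _).symm
  have h0 : ∀ x, (0 : ℝ) ≤ ‖w x‖ ^ 2 := fun x => sq_nonneg _
  have hT := tendsto_of_deriv_integrable_atTop hgdiff hint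
  have hB := tendsto_of_deriv_integrable_atBot hgdiff hint
  have hT0 : Tendsto (fun y => ‖w y‖ ^ 2) atTop (𝓝 0) := by
    rwa [limit_eq_zero_atTop hgint h0 hT] at hT
  have hB0 : Tendsto (fun y => ‖w y‖ ^ 2) atBot (𝓝 0) := by
    rwa [limit_eq_zero_atBot hgint h0 hB] at hB
  constructor
  · rw [tendsto_zero_iff_norm_tendsto_zero]
    have := (Real.continuous_sqrt.tendsto 0).comp hT0
    simpa [Function.comp_def, Real.sqrt_sq (norm_nonneg _)] using this
  · rw [tendsto_zero_iff_norm_tendsto_zero]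
    have := (Real.continuous_sqrt.tendsto 0).comp hB0
    simpa [Function.comp_def, Real.sqrt_sq (norm_nonneg _)] using this

lemma bounded_of_limits {f : ℝ → ℂ} (hc : Continuous f) {a b : ℂ}
    (h1 : Tendsto f atTop (𝓝 a)) (h2 : Tendsto f atBot (𝓝 b)) :
    ∃ C, ∀ x, ‖f x‖ ≤ C := by
  obtain ⟨M, hM⟩ := eventually_atTop.mp (h1.norm.eventually_lt_const (lt_add_one ‖a‖))
  obtain ⟨m, hm⟩ := eventually_atBot.mp (h2.norm.eventually_lt_const (lt_add_one ‖b‖))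
  obtain ⟨C₀, hC₀⟩ :=
    (isCompact_Icc (a := m) (b := M)).exists_bound_of_continuousOn hc.continuousOn
  refine ⟨max C₀ (max (‖a‖ + 1) (‖b‖ + 1)), fun x => ?_⟩
  rcases le_total x M with hxM | hxM
  · rcases le_total m x with hmx | hmx
    · exact le_trans (hC₀ x ⟨hmx, hxM⟩) (le_max_left _ _)
    · exact le_trans (hm x hmx).le (le_trans (le_max_right _ _) (le_max_right _ _))
  · exact le_trans (hM x hxM).le (le_trans (le_max_left _ _) (le_max_right _ _))

lemma norm_add_sq_rInner (a b : ℂ) : ‖a + b‖ ^ 2 = ‖a‖ ^ 2 + 2 * rInner a b + ‖b‖ ^ 2 := by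
  simp only [norm_sq_eq', rInner_eq, Complex.add_re, Complex.add_im]
  ring

end AuxLemmas


/-- **Decomposition of the momentum under `H¹` perturbations**:
`𝒫(V₀ + w) = 𝒫(V₀) + (1/2)∫⟨iw, w'⟩ + ∫⟨iw, V₀'⟩`. -/
theorem momentum_add_H1 (V₀ w : ℝ → ℂ) (hV : InZ1 V₀) (hw : MemH1 w) :
    InZ1 (fun x => V₀ x + w x) ∧
      ∀ P₀ : ℝ, Tendsto (PR V₀) atTop (nhds P₀) →
        Tendsto (PR (fun x => V₀ x + w x)) atTop
          (nhds (P₀ + (1 / 2) * (∫ x, rInner (Complex.I * w x) (deriv w x))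
            + ∫ x, rInner (Complex.I * w x) (deriv V₀ x))) := by
  obtain ⟨hX, ⟨lT, hlT⟩, ⟨lB, hlB⟩⟩ := hV
  obtain ⟨hwT, hwB⟩ := hw.tendsto_zero
  obtain ⟨Cv, hCv⟩ := hX.bdd
  obtain ⟨Cw, hCw⟩ := bounded_of_limits hw.diff.continuous hwT hwB
  have hCv0 : 0 ≤ Cv := le_trans (norm_nonneg _) (hCv 0)
  have hCw0 : 0 ≤ Cw := le_trans (norm_nonneg _) (hCw 0)
  have hdsum : ∀ x, deriv (fun y => V₀ y + w y) x = deriv V₀ x + deriv w x :=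
    fun x => deriv_add (hX.diff x) (hw.diff x)
  have hV' := hX.deriv_memL2
  have hw2 := hw.memL2
  have hw' := hw.deriv_memL2
  have hcontV : Continuous V₀ := hX.diff.continuous
  have hcontw : Continuous w := hw.diff.continuous
  -- MemLp of I * w
  have hIw : MemLp (fun x => Complex.I * w x) 2 volume := hw2.const_mul Complex.I
  -- norms of I * f
  have hnormIV : ∀ x, ‖Complex.I * V₀ x‖ ≤ Cv := fun x => by
    rw [norm_mul, Complex.norm_I, one_mul]; exact hCv x
  -- key integrabilities
  have hB : Integrable (fun x => rInner (Complex.I * w x) (deriv w x)) volume :=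
    integrable_rInner hIw hw'
  have hC : Integrable (fun x => rInner (Complex.I * w x) (deriv V₀ x)) volume :=
    integrable_rInner hIw hV'
  have hIVmeas : AEStronglyMeasurable (fun x => Complex.I * V₀ x) volume :=
    (continuous_const.mul hcontV).aestronglyMeasurable
  have hA2 : MemLp (fun x => rInner (Complex.I * V₀ x) (deriv V₀ x)) 2 volume :=
    memL2_rInner_bdd hIVmeas hnormIV hV'
  have hE2 : MemLp (fun x => rInner (Complex.I * V₀ x) (deriv w x)) 2 volume :=
    memL2_rInner_bdd hIVmeas hnormIV hw'
  constructor
  · refine ⟨⟨⟨Cv + Cw, fun x => (norm_add_le _ _).trans (add_le_add (hCv x) (hCw x))⟩,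
      hX.diff.add hw.diff, ?_, ?_⟩, ⟨lT + 0, hlT.add hwT⟩, ⟨lB + 0, hlB.add hwB⟩⟩
    · exact (hV'.add hw').ae_eq (Eventually.of_forall fun x => (hdsum x).symm)
    · -- Ginzburg-Landau term
      have hD : MemLp (fun x => 2 * rInner (V₀ x) (w x) + ‖w x‖ ^ 2) 2 volume := by
        have hb : MemLp (fun x => (4 * Cv + Cw) * ‖w x‖) 2 volume := hw2.norm.const_mul _
        have hcont : Continuous (fun x => 2 * rInner (V₀ x) (w x) + ‖w x‖ ^ 2) := by
          simp only [rInner_eq]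
          exact (continuous_const.mul (((Complex.continuous_re.comp hcontV).mul
            (Complex.continuous_re.comp hcontw)).add
            ((Complex.continuous_im.comp hcontV).mul
              (Complex.continuous_im.comp hcontw)))).add (hcontw.norm.pow 2)
        refine hb.of_le hcont.aestronglyMeasurable (Eventually.of_forall fun x => ?_)
        rw [Real.norm_eq_abs, Real.norm_eq_abs, _root_.abs_of_nonneg
          (mul_nonneg (by linarith) (norm_nonneg _))]
        have hr := abs_rInner_le (V₀ x) (w x)
        have h1 := hCv x
        have h2 := hCw x
        have h3 := norm_nonneg (w x)
        have h4 := norm_nonneg (V₀ x)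
        have hsq : ‖w x‖ ^ 2 ≤ Cw * ‖w x‖ := by nlinarith
        rw [abs_le]
        constructor <;>
          nlinarith [neg_abs_le (rInner (V₀ x) (w x)), le_abs_self (rInner (V₀ x) (w x)),
            sq_nonneg ‖w x‖]
      have := hX.gl_memL2.sub hD
      refine this.ae_eq (Eventually.of_forall fun x => ?_)
      show (1 - ‖V₀ x‖ ^ 2) - (2 * rInner (V₀ x) (w x) + ‖w x‖ ^ 2) = 1 - ‖V₀ x + w x‖ ^ 2
      rw [norm_add_sq_rInner]
      ring
  · intro P₀ hP₀
    -- the key pointwise/integral identity for finite R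
    have key : ∀ R : ℝ, PR (fun x => V₀ x + w x) R
        = PR V₀ R + (1 / 2) * (∫ x in (-R)..R, rInner (Complex.I * w x) (deriv w x))
          + (∫ x in (-R)..R, rInner (Complex.I * w x) (deriv V₀ x))
          + (1 / 2) * (rInner (Complex.I * V₀ R) (w R)
              - rInner (Complex.I * V₀ (-R)) (w (-R))) := by
      intro R
      have hiiA := memL2_intervalIntegrable hA2 (-R) R
      have hiiB := hB.intervalIntegrable (a := -R) (b := R)
      have hiiC := hC.intervalIntegrable (a := -R) (b := R)
      have hiiE := memL2_intervalIntegrable hE2 (-R) R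
      have hDh : ∀ x, HasDerivAt (fun y => rInner (Complex.I * V₀ y) (w y))
          (rInner (Complex.I * V₀ x) (deriv w x) - rInner (Complex.I * w x) (deriv V₀ x)) x :=
        hasDerivAt_cross hX.diff hw.diff
      have hftc : (∫ x in (-R)..R, (rInner (Complex.I * V₀ x) (deriv w x)
            - rInner (Complex.I * w x) (deriv V₀ x)))
          = rInner (Complex.I * V₀ R) (w R) - rInner (Complex.I * V₀ (-R)) (w (-R)) :=
        intervalIntegral.integral_eq_sub_of_hasDerivAt (fun x _ => hDh x) (hiiE.sub hiiC)
      rw [intervalIntegral.integral_sub hiiE hiiC] at hftc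
      have hcongr : ∀ x ∈ Set.uIcc (-R) R,
          rInner (Complex.I * (V₀ x + w x)) (deriv (fun y => V₀ y + w y) x)
            = rInner (Complex.I * V₀ x) (deriv V₀ x)
              + rInner (Complex.I * w x) (deriv w x)
              + rInner (Complex.I * w x) (deriv V₀ x)
              + rInner (Complex.I * V₀ x) (deriv w x) := by
        intro x _
        rw [hdsum x]
        exact integrand_expand _ _ _ _
      unfold PR
      rw [intervalIntegral.integral_congr hcongr,
        intervalIntegral.integral_add ((hiiA.add hiiB).add hiiC) hiiE,
        intervalIntegral.integral_add (hiiA.add hiiB) hiiC,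
        intervalIntegral.integral_add hiiA hiiB]
      linarith [hftc]
    -- limits of each piece
    have hBlim := MeasureTheory.intervalIntegral_tendsto_integral hB
      tendsto_neg_atTop_atBot tendsto_id
    have hClim := MeasureTheory.intervalIntegral_tendsto_integral hC
      tendsto_neg_atTop_atBot tendsto_id
    have hwnormT : Tendsto (fun R => 2 * Cv * ‖w R‖) atTop (𝓝 0) := by
      have := hwT.norm.const_mul (2 * Cv)
      simpa using this
    have hwnormB : Tendsto (fun R => 2 * Cv * ‖w (-R)‖) atTop (𝓝 0) := by
      have := (hwB.comp tendsto_neg_atTop_atBot).norm.const_mul (2 * Cv)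
      simpa [Function.comp_def] using this
    have hhbound : ∀ x : ℝ, ‖rInner (Complex.I * V₀ x) (w x)‖ ≤ 2 * Cv * ‖w x‖ := by
      intro x
      rw [Real.norm_eq_abs]
      calc |rInner (Complex.I * V₀ x) (w x)| ≤ 2 * (‖Complex.I * V₀ x‖ * ‖w x‖) :=
            abs_rInner_le _ _
        _ ≤ 2 * Cv * ‖w x‖ := by
            nlinarith [hnormIV x, norm_nonneg (w x), norm_nonneg (Complex.I * V₀ x)]
    have hhT : Tendsto (fun R => rInner (Complex.I * V₀ R) (w R)) atTop (𝓝 0) :=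
      squeeze_zero_norm hhbound hwnormT
    have hhB : Tendsto (fun R => rInner (Complex.I * V₀ (-R)) (w (-R))) atTop (𝓝 0) :=
      squeeze_zero_norm (fun R => hhbound (-R)) hwnormB
    have final := ((hP₀.add (hBlim.const_mul (1 / 2 : ℝ))).add hClim).add
      ((hhT.sub hhB).const_mul (1 / 2 : ℝ))
    have final2 := final.congr fun R => (key R).symm
    simpa using final2
end
end

section
/- Finitely many bad points for maps of bounded energy: let E > 0 and 0 < δ₀ < 1. There exists an integer ℓ₀ = ℓ₀(E, δ₀), depending only on E and δ₀, such that for any v ∈ X¹ with E(v) ≤ E, either |1 − |v(x)|| < δ₀ for all x ∈ ℝ, or there exist ℓ ≤ ℓ₀ points x₁, …, x_ℓ ∈ ℝ with |1 − |v(x_i)|| ≥ δ₀ for each 1 ≤ i ≤ ℓ, and |1 − |v(x)|| ≤ δ₀ for all x ∈ ℝ outside the union of the intervals [x_i − 1, x_i + 1]. -/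
open MeasureTheory Filter Set Topology Real

noncomputable section

def eDen (v : ℝ → ℂ) (x : ℝ) : ℝ :=
  (1/2)*‖deriv v x‖^2 + (1/4)*((1:ℝ)-‖v x‖^2)^2

lemma eDen_nonneg (v : ℝ → ℂ) (x : ℝ) : 0 ≤ eDen v x := by
  unfold eDen; positivity

lemma integrable_sq_deriv {v : ℝ → ℂ} (hv : InX1 v) :
    Integrable (fun x => ‖deriv v x‖^2) := hv.deriv_memL2.norm.integrable_sq

lemma integrable_gl {v : ℝ → ℂ} (hv : InX1 v) :
    Integrable (fun x => ((1:ℝ) - ‖v x‖ ^ 2)^2) := hv.gl_memL2.integrable_sq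

lemma integrable_eDen {v : ℝ → ℂ} (hv : InX1 v) : Integrable (eDen v) := by
  exact ((integrable_sq_deriv hv).const_mul _).add ((integrable_gl hv).const_mul _)

lemma energy_eq {v : ℝ → ℂ} (hv : InX1 v) : energy v = ∫ x, eDen v x := by
  unfold energy eDen
  rw [integral_add ((integrable_sq_deriv hv).const_mul _) ((integrable_gl hv).const_mul _),
    MeasureTheory.integral_const_mul, MeasureTheory.integral_const_mul]


lemma local_bound {v : ℝ → ℂ} (hv : InX1 v) {δ₀ : ℝ} (hδ₀ : 0 < δ₀) (p : ℝ)
    (hp : δ₀ ≤ |1 - ‖v p‖|) :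
    δ₀^2/16 ≤ ∫ x in Ioc p (p+1), eDen v x := by
  have hIe : IntegrableOn (eDen v) (Ioc p (p+1)) := (integrable_eDen hv).integrableOn
  by_cases hc : ∀ y ∈ Icc p (p+1), δ₀/2 ≤ |1 - ‖v y‖|
  · -- potential energy dominates
    have key : ∀ x ∈ Ioc p (p+1), δ₀^2/16 ≤ eDen v x := by
      intro x hx
      have h1 := hc x ⟨le_of_lt hx.1, hx.2⟩
      have h2 : (δ₀/2)^2 ≤ (1 - ‖v x‖)^2 := by
        have := pow_le_pow_left₀ (by positivity) h1 2
        rwa [sq_abs] at this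
      have ha : (0:ℝ) ≤ ‖v x‖ := norm_nonneg _
      have h3 : (1:ℝ) ≤ (1 + ‖v x‖)^2 := by nlinarith
      have h4 : (δ₀/2)^2 * 1 ≤ (1 - ‖v x‖)^2 * (1 + ‖v x‖)^2 :=
        mul_le_mul h2 h3 zero_le_one (sq_nonneg _)
      have hd : (0:ℝ) ≤ ‖deriv v x‖^2 := sq_nonneg _
      unfold eDen
      nlinarith [h4, hd]
    have := setIntegral_ge_of_const_le (c := δ₀^2/16) measurableSet_Ioc
      (by simp [Real.volume_Ioc]) key hIe
    simpa [Real.volume_Ioc] using this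
  · push_neg at hc
    obtain ⟨y, hy, hylt⟩ := hc
    have hpy : p ≤ y := hy.1
    -- FTC + Cauchy-Schwarz-type bound
    have hbd : ∀ x : ℝ, ‖deriv v x‖ ≤ (1 + ‖deriv v x‖^2)/2 := by
      intro x; nlinarith [sq_nonneg (1 - ‖deriv v x‖)]
    have hgint : IntegrableOn (fun x => (1 + ‖deriv v x‖^2)/2) (Ioc p y) := by
      apply Integrable.div_const
      exact (integrableOn_const measure_Ioc_lt_top.ne).add
        (integrable_sq_deriv hv).integrableOn
    have hint : IntegrableOn (deriv v) (Ioc p y) := by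
      apply Integrable.mono' hgint hv.deriv_memL2.aestronglyMeasurable.restrict
      filter_upwards with x using hbd x
    have hii : IntervalIntegrable (deriv v) volume p y :=
      (intervalIntegrable_iff_integrableOn_Ioc_of_le hpy).2 hint
    have hftc : ∫ x in p..y, deriv v x = v y - v p :=
      intervalIntegral.integral_deriv_eq_sub (fun x _ => hv.diff x) hii
    have h1 : δ₀/2 ≤ ‖v y - v p‖ := by
      have habs : |‖v y‖ - ‖v p‖| ≤ ‖v y - v p‖ := abs_norm_sub_norm_le _ _
      have htri : |1 - ‖v p‖| ≤ |1 - ‖v y‖| + |‖v y‖ - ‖v p‖| := by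
        calc |1 - ‖v p‖| = |(1 - ‖v y‖) + (‖v y‖ - ‖v p‖)| := by ring_nf
          _ ≤ _ := abs_add_le _ _
      linarith
    have h2 : ‖v y - v p‖ ≤ ∫ x in p..y, ‖deriv v x‖ := by
      rw [← hftc]
      exact intervalIntegral.norm_integral_le_integral_norm hpy
    set K := ∫ x in Ioc p (p+1), ‖deriv v x‖^2 with hK
    have hKy : ∫ x in Ioc p y, ‖deriv v x‖^2 ≤ K := by
      apply setIntegral_mono_set (integrable_sq_deriv hv).integrableOn
      · filter_upwards with x using sq_nonneg _
      · exact HasSubset.Subset.eventuallyLE (Ioc_subset_Ioc le_rfl hy.2)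
    have h3 : ∫ x in p..y, ‖deriv v x‖ ≤ ∫ x in p..y, (δ₀/4 + ‖deriv v x‖^2/δ₀) := by
      apply intervalIntegral.integral_mono_on hpy
      · exact hii.norm
      · exact (intervalIntegrable_iff_integrableOn_Ioc_of_le hpy).2 <|
          (integrableOn_const measure_Ioc_lt_top.ne).add
            ((integrable_sq_deriv hv).integrableOn.div_const _)
      · intro x _
        rw [← mul_le_mul_iff_of_pos_right hδ₀, add_mul, div_mul_cancel₀ _ hδ₀.ne']
        nlinarith [sq_nonneg (δ₀/2 - ‖deriv v x‖)]
    have h4 : ∫ x in p..y, (δ₀/4 + ‖deriv v x‖^2/δ₀)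
        = (y - p) * (δ₀/4) + (∫ x in Ioc p y, ‖deriv v x‖^2)/δ₀ := by
      rw [intervalIntegral.integral_add (intervalIntegrable_const)
        ((intervalIntegrable_iff_integrableOn_Ioc_of_le hpy).2
          ((integrable_sq_deriv hv).integrableOn.div_const _))]
      rw [intervalIntegral.integral_const, intervalIntegral.integral_of_le hpy]
      rw [integral_div]
      simp [smul_eq_mul]
    have hyp1 : y - p ≤ 1 := by linarith [hy.2]
    have hchain : δ₀/2 ≤ (y - p) * (δ₀/4) + K/δ₀ := by
      have h5 := (h2.trans h3).trans_eq h4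
      have hmono : (∫ x in Ioc p y, ‖deriv v x‖^2)/δ₀ ≤ K/δ₀ := by gcongr
      linarith
    have h6 : δ₀/2 ≤ δ₀/4 + K/δ₀ := by
      nlinarith [mul_nonneg (by linarith [hy.2] : (0:ℝ) ≤ 1-(y-p)) (by positivity : (0:ℝ) ≤ δ₀/4)]
    have h7 : δ₀/4 ≤ K/δ₀ := by linarith
    have hK4 : δ₀^2/4 ≤ K := by
      calc δ₀^2/4 = (δ₀/4)*δ₀ := by ring
        _ ≤ (K/δ₀)*δ₀ := mul_le_mul_of_nonneg_right h7 hδ₀.le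
        _ = K := div_mul_cancel₀ _ hδ₀.ne'
    have hfin : (1/2)*K ≤ ∫ x in Ioc p (p+1), eDen v x := by
      have hle : ∫ x in Ioc p (p+1), (1/2)*‖deriv v x‖^2 ≤ ∫ x in Ioc p (p+1), eDen v x := by
        apply setIntegral_mono_on (((integrable_sq_deriv hv).const_mul _).integrableOn) hIe
          measurableSet_Ioc
        intro x _
        unfold eDen
        nlinarith [sq_nonneg ((1:ℝ) - ‖v x‖^2)]
      rwa [MeasureTheory.integral_const_mul] at hle
    nlinarith [hK4, hfin, sq_nonneg δ₀]

lemma counting {v : ℝ → ℂ} (hv : InX1 v) {δ₀ E₀ : ℝ} (hδ₀ : 0 < δ₀)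
    (hE : energy v ≤ E₀) (S : Finset ℝ)
    (hbad : ∀ a ∈ S, δ₀ ≤ |1 - ‖v a‖|)
    (hsep : ∀ a ∈ S, ∀ b ∈ S, a ≠ b → 1 < |a - b|) :
    (S.card : ℝ) * (δ₀^2/16) ≤ E₀ := by
  have hdisj : (S : Set ℝ).Pairwise (Function.onFun Disjoint fun i => Ioc i (i+1)) := by
    intro a ha b hb hab
    have h := hsep a ha b hb hab
    simp only [Function.onFun]
    rw [Set.Ioc_disjoint_Ioc]
    rcases abs_cases (a - b) with ⟨he, _⟩ | ⟨he, _⟩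
    · exact le_trans (min_le_right _ _) (le_max_of_le_left (by linarith))
    · exact le_trans (min_le_left _ _) (le_max_of_le_right (by linarith))
  have hsum : ∑ i ∈ S, ∫ x in Ioc i (i+1), eDen v x
      = ∫ x in ⋃ i ∈ S, Ioc i (i+1), eDen v x :=
    (integral_biUnion_finset S (fun i _ => measurableSet_Ioc) hdisj
      (fun i _ => (integrable_eDen hv).integrableOn)).symm
  have hlow : (S.card : ℝ) * (δ₀^2/16) ≤ ∑ i ∈ S, ∫ x in Ioc i (i+1), eDen v x := by
    have := Finset.card_nsmul_le_sum (s := S) (fun i => ∫ x in Ioc i (i+1), eDen v x) (δ₀^2/16)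
      (fun i hi => local_bound hv hδ₀ i (hbad i hi))
    simpa [nsmul_eq_mul] using this
  have hup : ∫ x in ⋃ i ∈ S, Ioc i (i+1), eDen v x ≤ ∫ x, eDen v x :=
    setIntegral_le_integral (integrable_eDen hv) (.of_forall (eDen_nonneg v))
  have hee := energy_eq hv
  linarith


/-- **Finitely many bad points for maps of bounded energy.** -/
theorem finitely_many_bad_points (E₀ δ₀ : ℝ) (hE₀ : 0 < E₀) (hδ₀ : 0 < δ₀) (hδ₀' : δ₀ < 1) :
    ∃ ℓ₀ : ℕ, ∀ v : ℝ → ℂ, InX1 v → energy v ≤ E₀ →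
      (∀ x : ℝ, |1 - ‖v x‖| < δ₀) ∨
      ∃ ℓ : ℕ, ℓ ≤ ℓ₀ ∧ ∃ pts : Fin ℓ → ℝ,
        (∀ i, δ₀ ≤ |1 - ‖v (pts i)‖|) ∧
        ∀ x : ℝ, x ∉ (⋃ i, Icc (pts i - 1) (pts i + 1)) → |1 - ‖v x‖| ≤ δ₀ := by
  refine ⟨⌈16*E₀/δ₀^2⌉₊, fun v hv hE => ?_⟩
  by_cases hall : ∀ x : ℝ, |1 - ‖v x‖| < δ₀
  · exact Or.inl hall
  push_neg at hall
  obtain ⟨x₀, hx₀⟩ := hall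
  right
  set ℓ₀ := ⌈16*E₀/δ₀^2⌉₊ with hℓ₀
  set P : ℕ → Prop := fun n => ∃ S : Finset ℝ, S.card = n ∧ (∀ a ∈ S, δ₀ ≤ |1 - ‖v a‖|) ∧
    (∀ a ∈ S, ∀ b ∈ S, a ≠ b → 1 < |a - b|) with hP
  have hbound : ∀ n, P n → n ≤ ℓ₀ := by
    rintro n ⟨S, hcard, hbad, hsep⟩
    have h := counting hv hδ₀ hE S hbad hsep
    rw [hcard] at h
    have h2 : (n : ℝ) ≤ 16*E₀/δ₀^2 := by
      rw [le_div_iff₀ (by positivity)]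
      nlinarith
    exact_mod_cast h2.trans (Nat.le_ceil _)
  have hne : P 1 := ⟨{x₀}, by simp, by simpa using hx₀, by simp⟩
  have hbdd : BddAbove {n | P n} := ⟨ℓ₀, fun n hn => hbound n hn⟩
  set m := sSup {n | P n} with hm
  obtain ⟨S, hcard, hbad, hsep⟩ : P m := Nat.sSup_mem ⟨1, hne⟩ hbdd
  have hm_le : m ≤ ℓ₀ := hbound m ⟨S, hcard, hbad, hsep⟩
  refine ⟨m, hm_le, fun i => ((S.orderIsoOfFin hcard i : ℝ) : ℝ),
    fun i => hbad _ (S.orderIsoOfFin hcard i).2, ?_⟩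
  intro x hx
  by_contra hgt
  push_neg at hgt
  have hsep' : ∀ p ∈ S, 1 < |x - p| := by
    intro p hp
    by_contra hle
    push_neg at hle
    apply hx
    refine mem_iUnion.2 ⟨(S.orderIsoOfFin hcard).symm ⟨p, hp⟩, ?_⟩
    have hpp : ((S.orderIsoOfFin hcard) ((S.orderIsoOfFin hcard).symm ⟨p, hp⟩) : ℝ) = p := by
      simp
    simp only [hpp]
    obtain ⟨h1, h2⟩ := abs_le.1 hle
    exact ⟨by linarith, by linarith⟩
  have hxS : x ∉ S := by
    intro hxS
    have := hsep' x hxS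
    simp at this
    linarith
  have hP1 : P (m+1) := by
    refine ⟨insert x S, by rw [Finset.card_insert_of_notMem hxS, hcard], ?_, ?_⟩
    · intro a ha
      rcases Finset.mem_insert.1 ha with rfl | ha
      · exact le_of_lt hgt
      · exact hbad a ha
    · intro a ha b hb hab
      rcases Finset.mem_insert.1 ha with ha' | ha' <;>
        rcases Finset.mem_insert.1 hb with hb' | hb'
      · exact absurd (ha'.trans hb'.symm) hab
      · subst ha'; exact hsep' b hb'
      · subst hb'; rw [abs_sub_comm]; exact hsep' a ha'
      · exact hsep a ha' b hb' hab
  have := le_csSup hbdd hP1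
  omega
end
end

section
/- Infimum of modulus controlled by energy and momentum: if v ∈ X¹ vanishes nowhere and p(v) ≠ 0, then inf_{x∈ℝ} |v(x)| ≤ E(v) / (√2 |p(v)|). In particular, if δ(v) = 1 − E(v)/(√2|p(v)|) > 0, then for any 0 < δ < δ(v) there exists x_δ ∈ ℝ with 1 − |v(x_δ)| ≥ δ. -/
open MeasureTheory Filter Set Topology Real

noncomputable section

/-- **Infimum of the modulus controlled by energy and momentum**: for a nowhere-vanishing
`v = ρ e^{iφ} ∈ X¹` with renormalized momentum `p(v) = (1/2)∫(ρ² - 1)φ' ≠ 0`,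
`inf |v| ≤ E(v) / (√2 |p(v)|)`. -/
theorem inf_modulus_le_energy_div_momentum (v : ℝ → ℂ) (hv : InX1 v)
    (ρ φ : ℝ → ℝ) (hρpos : ∀ x, 0 < ρ x)
    (hρ : Differentiable ℝ ρ) (hφ : Differentiable ℝ φ)
    (hrep : ∀ x, v x = (ρ x : ℂ) * Complex.exp (φ x * Complex.I))
    (P : ℝ) (hPdef : P = (1 / 2) * ∫ x, (ρ x ^ 2 - 1) * deriv φ x) (hP : P ≠ 0) :
    (⨅ x : ℝ, ‖v x‖) ≤ energy v / (Real.sqrt 2 * |P|) ∧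
      (0 < 1 - energy v / (Real.sqrt 2 * |P|) →
        ∀ δ : ℝ, 0 < δ → δ < 1 - energy v / (Real.sqrt 2 * |P|) →
          ∃ xδ : ℝ, δ ≤ 1 - ‖v xδ‖) := by
  have hρv : ∀ x, ‖v x‖ = ρ x := by
    intro x
    rw [hrep x, norm_mul,
      Complex.norm_exp_ofReal_mul_I, mul_one, Complex.norm_real,
      Real.norm_eq_abs, abs_of_pos (hρpos x)]
  -- derivative of v
  have hDv : ∀ x, HasDerivAt v
      ((((deriv ρ x : ℝ) : ℂ) + (ρ x : ℂ) * (deriv φ x) * Complex.I)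
        * Complex.exp (φ x * Complex.I)) x := by
    intro x
    have h1 : HasDerivAt (fun y => ((ρ y : ℝ) : ℂ)) (((deriv ρ x : ℝ) : ℂ)) x :=
      ((hρ x).hasDerivAt).ofReal_comp
    have h2 : HasDerivAt (fun y => ((φ y : ℝ) : ℂ) * Complex.I)
        (((deriv φ x : ℝ) : ℂ) * Complex.I) x :=
      (((hφ x).hasDerivAt).ofReal_comp).mul_const _
    have h3 := h2.cexp
    have h4 := h1.mul h3
    have hveq : v = fun y => ((ρ y : ℝ) : ℂ) * Complex.exp (((φ y : ℝ) : ℂ) * Complex.I) :=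
      funext hrep
    rw [hveq]
    convert h4 using 1
    · rfl
    · rfl
    ring
  have hnorm2 : ∀ x, ‖deriv v x‖ ^ 2 = (deriv ρ x) ^ 2 + (ρ x * deriv φ x) ^ 2 := by
    intro x
    rw [(hDv x).deriv, norm_mul,
      Complex.norm_exp_ofReal_mul_I, mul_one]
    have heq : (((deriv ρ x : ℝ) : ℂ) + (ρ x : ℂ) * (deriv φ x) * Complex.I)
        = ((deriv ρ x : ℝ) : ℂ) + ((ρ x * deriv φ x : ℝ) : ℂ) * Complex.I := by
      push_cast; ring
    rw [heq, Complex.sq_norm, Complex.normSq_add_mul_I]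
  have hmρ : Measurable ρ := hρ.continuous.measurable
  have hmdφ : Measurable (deriv φ) := measurable_deriv φ
  have hI1 : Integrable (fun x => ‖deriv v x‖ ^ 2) :=
    (memLp_two_iff_integrable_sq_norm hv.deriv_memL2.aestronglyMeasurable).1 hv.deriv_memL2
  have hglρ : (fun x => (1 : ℝ) - ‖v x‖ ^ 2) = fun x => (1 : ℝ) - ρ x ^ 2 := by
    funext x; rw [hρv x]
  have hI2 : Integrable (fun x => ((1 : ℝ) - ρ x ^ 2) ^ 2) := by
    have := (memLp_two_iff_integrable_sq hv.gl_memL2.aestronglyMeasurable).1 hv.gl_memL2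
    simp only [hρv] at this
    exact this
  have hI3 : Integrable (fun x => ρ x ^ 2 * (deriv φ x) ^ 2) := by
    refine Integrable.mono' hI1 ?_ ?_
    · exact ((hmρ.pow_const 2).mul (hmdφ.pow_const 2)).aestronglyMeasurable
    · filter_upwards with x
      rw [Real.norm_eq_abs, abs_of_nonneg (by positivity), hnorm2 x]
      nlinarith [sq_nonneg (deriv ρ x), mul_pow (ρ x) (deriv φ x) 2]
  have hIf : Integrable (fun x => (ρ x ^ 2 - 1) * deriv φ x) := by
    by_contra h
    rw [integral_undef h] at hPdef
    simp at hPdef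
    exact hP hPdef
  set m := ⨅ x : ℝ, ‖v x‖ with hm
  have hbdd : BddBelow (Set.range fun x : ℝ => ‖v x‖) :=
    ⟨0, by rintro y ⟨x, rfl⟩; exact norm_nonneg _⟩
  have hm0 : 0 ≤ m := le_ciInf fun x => norm_nonneg _
  have hmle : ∀ x, m ≤ ρ x := by
    intro x
    have := ciInf_le hbdd x
    rwa [hρv x] at this
  have hs2 : (0 : ℝ) < Real.sqrt 2 := by positivity
  have hs2sq : Real.sqrt 2 * Real.sqrt 2 = 2 := Real.mul_self_sqrt (by norm_num)
  -- pointwise inequality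
  have hpt : ∀ x, m * |(ρ x ^ 2 - 1) * deriv φ x|
      ≤ (Real.sqrt 2 / 2) * (ρ x ^ 2 * (deriv φ x) ^ 2)
        + (Real.sqrt 2 / 4) * ((1 : ℝ) - ρ x ^ 2) ^ 2 := by
    intro x
    have h1 : m * |(ρ x ^ 2 - 1) * deriv φ x| ≤ (ρ x * |deriv φ x|) * |1 - ρ x ^ 2| := by
      rw [abs_mul, abs_sub_comm]
      have h2 := hmle x
      have h3 := abs_nonneg (deriv φ x)
      have h4 := abs_nonneg (1 - ρ x ^ 2)
      nlinarith [mul_le_mul_of_nonneg_right h2 (mul_nonneg h4 h3)]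
    refine h1.trans ?_
    set a := ρ x * |deriv φ x| with ha
    set b := |1 - ρ x ^ 2| with hb
    have ha2 : a ^ 2 = ρ x ^ 2 * (deriv φ x) ^ 2 := by rw [ha, mul_pow, sq_abs]
    have hb2 : b ^ 2 = ((1 : ℝ) - ρ x ^ 2) ^ 2 := sq_abs _
    rw [← ha2, ← hb2]
    nlinarith [sq_nonneg (Real.sqrt 2 * a - b), hs2sq, hs2, sq_nonneg a, sq_nonneg b]
  -- integrate
  set G1 := ∫ x, ρ x ^ 2 * (deriv φ x) ^ 2 with hG1
  set G2 := ∫ x, ((1 : ℝ) - ρ x ^ 2) ^ 2 with hG2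
  set A := ∫ x, ‖deriv v x‖ ^ 2 with hA
  set B := ∫ x, ((1 : ℝ) - ‖v x‖ ^ 2) ^ 2 with hB
  have hG1A : G1 ≤ A := by
    refine integral_mono hI3 hI1 fun x => ?_
    rw [hnorm2 x]
    nlinarith [sq_nonneg (deriv ρ x), mul_pow (ρ x) (deriv φ x) 2]
  have hG2B : G2 = B := by rw [hG2, hB]; simp only [hρv]
  set I := ∫ x, |(ρ x ^ 2 - 1) * deriv φ x| with hI
  have h8 : m * I ≤ (Real.sqrt 2 / 2) * G1 + (Real.sqrt 2 / 4) * G2 := by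
    rw [hI, ← integral_const_mul]
    rw [hG1, hG2, ← integral_const_mul, ← integral_const_mul, ← integral_add
      (hI3.const_mul _) (hI2.const_mul _)]
    exact integral_mono (hIf.abs.const_mul m)
      ((hI3.const_mul _).add (hI2.const_mul _)) hpt
  have hPabs : |P| ≤ (1 / 2) * I := by
    have hb := norm_integral_le_integral_norm (μ := volume) (fun x => (ρ x ^ 2 - 1) * deriv φ x)
    simp only [Real.norm_eq_abs] at hb
    rw [hPdef, abs_mul, abs_of_pos (by norm_num : (0:ℝ) < 1/2)]
    exact mul_le_mul_of_nonneg_left hb (by norm_num)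
  have hI0 : 0 ≤ I := integral_nonneg fun x => abs_nonneg _
  have hmain : m * (Real.sqrt 2 * |P|) ≤ energy v := by
    have c1 : m * (Real.sqrt 2 * |P|) ≤ m * (Real.sqrt 2 * ((1/2) * I)) := by
      have := mul_le_mul_of_nonneg_left hPabs hs2.le
      exact mul_le_mul_of_nonneg_left this hm0
    have c2 : m * (Real.sqrt 2 * ((1/2) * I)) = (Real.sqrt 2 / 2) * (m * I) := by ring
    have c3 : (Real.sqrt 2 / 2) * (m * I)
        ≤ (Real.sqrt 2 / 2) * ((Real.sqrt 2 / 2) * G1 + (Real.sqrt 2 / 4) * G2) :=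
      mul_le_mul_of_nonneg_left h8 (by positivity)
    have c4 : (Real.sqrt 2 / 2) * ((Real.sqrt 2 / 2) * G1 + (Real.sqrt 2 / 4) * G2)
        = (1/2) * G1 + (1/4) * G2 := by
      linear_combination (G1 / 4 + G2 / 8) * hs2sq
    have c5 : (1/2) * G1 + (1/4) * G2 ≤ (1/2) * A + (1/4) * B := by
      rw [hG2B]; linarith
    have : energy v = (1/2) * A + (1/4) * B := rfl
    linarith [c1, c2.le, c3, c4.le, c5]
  have hden : (0 : ℝ) < Real.sqrt 2 * |P| := by positivity
  have hfirst : m ≤ energy v / (Real.sqrt 2 * |P|) := by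
    rw [le_div_iff₀ hden]
    exact hmain
  refine ⟨hfirst, fun hpos δ hδ0 hδlt => ?_⟩
  have hlt : m < 1 - δ := lt_of_le_of_lt hfirst (by linarith)
  obtain ⟨x, hx⟩ := exists_lt_of_ciInf_lt hlt
  exact ⟨x, by linarith⟩
end
end

section
/- Energy and renormalized momentum of the gray solitons: for 0 < c < √2, the travelling wave 𝔳_c(x) = √((2−c²)/2) tanh(√(2−c²) x / 2) + i c/√2 vanishes nowhere and satisfies p(𝔳_c) = π/2 − arctan( c/√(2−c²) ) − (c/2)√(2−c²) and E(𝔳_c) = (2−c²)^{3/2}/3; consequently (d/dc) p(𝔳_c) = −√(2−c²), so c ↦ p(𝔳_c) is a decreasing diffeomorphism from (0,√2) onto (0, π/2). -/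
open MeasureTheory Filter Set Topology Real

noncomputable section

/-- The gray soliton profile `𝔳_c(x) = √((2-c²)/2) tanh(√(2-c²) x / 2) + i c/√2`. -/
def grayProfile (c : ℝ) (x : ℝ) : ℂ :=
  (Real.sqrt ((2 - c ^ 2) / 2) * Real.tanh (Real.sqrt (2 - c ^ 2) * x / 2) : ℝ)
    + Complex.I * (c / Real.sqrt 2 : ℝ)

/-- The renormalized momentum of the gray soliton, as a function of the speed. -/
def grayMomentum (c : ℝ) : ℝ :=
  π / 2 - Real.arctan (c / Real.sqrt (2 - c ^ 2)) - (c / 2) * Real.sqrt (2 - c ^ 2)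


/-! ### Auxiliary lemmas -/

lemma my_tanh_hasDerivAt (x : ℝ) : HasDerivAt Real.tanh (1 - Real.tanh x ^ 2) x := by
  have h := (Real.hasDerivAt_sinh x).div (Real.hasDerivAt_cosh x) (Real.cosh_pos x).ne'
  have hfun : Real.tanh = fun y => Real.sinh y / Real.cosh y :=
    funext fun y => Real.tanh_eq_sinh_div_cosh y
  rw [hfun]
  refine h.congr_deriv (Eq.symm ?_)
  have h1 : Real.cosh x ≠ 0 := (Real.cosh_pos x).ne'
  have h2 : Real.cosh x ^ 2 - Real.sinh x ^ 2 = 1 := Real.cosh_sq_sub_sinh_sq x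
  field_simp

lemma my_tanh_eq (x : ℝ) : Real.tanh x = (1 - Real.exp (-(2*x))) / (1 + Real.exp (-(2*x))) := by
  rw [Real.tanh_eq_sinh_div_cosh, Real.sinh_eq, Real.cosh_eq]
  have h1 : Real.exp x ≠ 0 := (Real.exp_pos x).ne'
  have h2 : (0:ℝ) < 1 + Real.exp (-(2*x)) := by positivity
  rw [div_eq_div_iff (by positivity) h2.ne']
  have h3 : Real.exp (-(2*x)) = Real.exp (-x) / Real.exp x := by
    rw [← Real.exp_sub]; ring_nf
  rw [h3]
  field_simp

lemma my_tendsto_tanh_atTop : Tendsto Real.tanh atTop (𝓝 1) := by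
  have h : Tendsto (fun x : ℝ => Real.exp (-(2*x))) atTop (𝓝 0) := by
    apply Real.tendsto_exp_atBot.comp
    exact (tendsto_neg_atBot_iff.mpr (tendsto_atTop_atTop_of_monotone
      (fun a b hab => by linarith) (fun b => ⟨b/2, by linarith⟩)))
  have h2 : Tendsto (fun x : ℝ => (1 - Real.exp (-(2*x))) / (1 + Real.exp (-(2*x)))) atTop
      (𝓝 ((1-0)/(1+0))) :=
    Tendsto.div (tendsto_const_nhds.sub h) (tendsto_const_nhds.add h) (by norm_num)
  norm_num at h2
  exact Tendsto.congr (fun x => (my_tanh_eq x).symm) h2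

lemma my_tendsto_tanh_atBot : Tendsto Real.tanh atBot (𝓝 (-1)) := by
  have h : Tendsto (fun x : ℝ => Real.tanh (-x)) atBot (𝓝 1) :=
    my_tendsto_tanh_atTop.comp tendsto_neg_atBot_atTop
  have h2 := h.neg
  simp only [Real.tanh_neg, neg_neg] at h2
  exact h2

lemma my_integrable_of_antideriv {F f : ℝ → ℝ} (hF : ∀ x, HasDerivAt F (f x) x)
    (hf : ∀ x, 0 ≤ f x) {A B : ℝ} (hbot : Tendsto F atBot (𝓝 A))
    (htop : Tendsto F atTop (𝓝 B)) : Integrable f := by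
  have h1 : IntegrableOn f (Ioi 0) :=
    integrableOn_Ioi_deriv_of_nonneg (hF 0).continuousAt.continuousWithinAt
      (fun x _ => hF x) (fun x hx => hf x) htop
  have hG : ∀ x : ℝ, HasDerivAt (fun y => -F (-y)) (f (-x)) x := by
    intro x
    have := ((hF (-x)).comp x (hasDerivAt_neg x)).neg
    simp at this; exact this
  have hGtop : Tendsto (fun y : ℝ => -F (-y)) atTop (𝓝 (-A)) :=
    (hbot.comp tendsto_neg_atTop_atBot).neg
  have h2' : IntegrableOn (fun x => f (-x)) (Ioi 0) :=
    integrableOn_Ioi_deriv_of_nonneg (hG 0).continuousAt.continuousWithinAt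
      (fun x _ => hG x) (fun x hx => hf (-x)) hGtop
  have h2 : IntegrableOn f (Iio 0) := by
    have := (MeasurePreserving.integrableOn_comp_preimage
      (Measure.measurePreserving_neg (volume : Measure ℝ))
      (Homeomorph.neg ℝ).measurableEmbedding (f := f) (s := Iio (0:ℝ))).1
    simp only [Function.comp_def, neg_preimage, neg_Iio, neg_zero] at this
    exact this h2'
  rw [← integrableOn_univ, ← Set.Iio_union_Ici (a := (0:ℝ)), integrableOn_union,
    integrableOn_Ici_iff_integrableOn_Ioi]
  exact ⟨h2, h1⟩

lemma my_integral_of_antideriv {F f : ℝ → ℝ} (hF : ∀ x, HasDerivAt F (f x) x)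
    (hf : ∀ x, 0 ≤ f x) {A B : ℝ} (hbot : Tendsto F atBot (𝓝 A))
    (htop : Tendsto F atTop (𝓝 B)) : ∫ x, f x = B - A :=
  MeasureTheory.integral_of_hasDerivAt_of_tendsto hF
    (my_integrable_of_antideriv hF hf hbot htop) hbot htop

lemma my_tanh_mul_hasDerivAt (b x : ℝ) :
    HasDerivAt (fun y => Real.tanh (b*y)) (b*(1 - Real.tanh (b*x)^2)) x := by
  have := (my_tanh_hasDerivAt (b*x)).comp x ((hasDerivAt_id x).const_mul b)
  simp [mul_comm] at this; exact this

lemma my_tendsto_tanh_mul_atTop {b : ℝ} (hb : 0 < b) :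
    Tendsto (fun x => Real.tanh (b*x)) atTop (𝓝 1) :=
  my_tendsto_tanh_atTop.comp (Tendsto.const_mul_atTop hb tendsto_id)

lemma my_tendsto_tanh_mul_atBot {b : ℝ} (hb : 0 < b) :
    Tendsto (fun x => Real.tanh (b*x)) atBot (𝓝 (-1)) :=
  my_tendsto_tanh_atBot.comp (Tendsto.const_mul_atBot hb tendsto_id)

lemma my_sech4 {b : ℝ} (hb : 0 < b) :
    Integrable (fun x => (1 - Real.tanh (b*x)^2)^2) ∧
    ∫ x, (1 - Real.tanh (b*x)^2)^2 = 4/(3*b) := by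
  set F : ℝ → ℝ := fun x => (Real.tanh (b*x) - Real.tanh (b*x)^3/3)/b with hFdef
  have hF : ∀ x, HasDerivAt F ((1 - Real.tanh (b*x)^2)^2) x := by
    intro x
    have ht := my_tanh_mul_hasDerivAt b x
    have h3 : HasDerivAt (fun x => Real.tanh (b*x)^3)
        (3 * Real.tanh (b*x)^2 * (b*(1 - Real.tanh (b*x)^2))) x := by
      have h := ht.pow 3; simp at h; exact h
    have h4 := (ht.sub (h3.div_const 3)).div_const b
    refine h4.congr_deriv (Eq.symm ?_)
    field_simp
  have hpos : ∀ x, 0 ≤ (1 - Real.tanh (b*x)^2)^2 := fun x => sq_nonneg _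
  have hbot : Tendsto F atBot (𝓝 (((-1) - (-1)^3/3)/b)) := by
    have h1 := my_tendsto_tanh_mul_atBot hb
    exact ((h1.sub ((h1.pow 3).div_const 3)).div_const b)
  have htop : Tendsto F atTop (𝓝 ((1 - 1^3/3)/b)) := by
    have h1 := my_tendsto_tanh_mul_atTop hb
    exact ((h1.sub ((h1.pow 3).div_const 3)).div_const b)
  refine ⟨my_integrable_of_antideriv hF hpos hbot htop, ?_⟩
  rw [my_integral_of_antideriv hF hpos hbot htop]
  field_simp
  ring

lemma my_grayProfile_eq (c : ℝ) :
    grayProfile c = fun x =>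
      ((Real.sqrt ((2 - c ^ 2) / 2) * Real.tanh ((Real.sqrt (2 - c ^ 2)/2) * x) : ℝ) : ℂ)
      + Complex.I * ((c / Real.sqrt 2 : ℝ) : ℂ) := by
  funext x
  rw [grayProfile]
  norm_num [mul_div_right_comm]

lemma my_normsq (r s : ℝ) : ‖((r:ℂ) + Complex.I * s)‖^2 = r^2 + s^2 := by
  rw [Complex.sq_norm, Complex.normSq_apply]
  simp
  ring

lemma my_im_mk (r s : ℝ) : ((r:ℂ) + Complex.I * s).im = s := by simp

lemma my_gp_hasDerivAt (a b d x : ℝ) :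
    HasDerivAt (fun x => ((a * Real.tanh (b*x) : ℝ) : ℂ) + Complex.I * (d : ℝ))
      ((a * (b * (1 - Real.tanh (b*x)^2)) : ℝ) : ℂ) x := by
  have h1 : HasDerivAt (fun x => a * Real.tanh (b*x)) (a * (b * (1 - Real.tanh (b*x)^2))) x :=
    (my_tanh_mul_hasDerivAt b x).const_mul a
  exact (HasDerivAt.ofReal_comp h1).add_const _

lemma my_im_calc (r s t θ : ℝ) :
    ((starRingEnd ℂ) ((r:ℂ) * Complex.exp (θ * Complex.I))
      * ((s:ℂ) * Complex.exp (θ*Complex.I)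
        + (r:ℂ) * ((t:ℂ) * Complex.I * Complex.exp (θ*Complex.I)))).im = r^2*t := by
  have he : (starRingEnd ℂ) (Complex.exp (θ*Complex.I)) * Complex.exp (θ*Complex.I) = 1 := by
    rw [← Complex.exp_conj, ← Complex.exp_add]
    simp
  have h2 : (starRingEnd ℂ) ((r:ℂ) * Complex.exp (θ * Complex.I))
      * ((s:ℂ) * Complex.exp (θ*Complex.I)
        + (r:ℂ) * ((t:ℂ) * Complex.I * Complex.exp (θ*Complex.I)))
      = ((starRingEnd ℂ) (Complex.exp (θ*Complex.I)) * Complex.exp (θ*Complex.I))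
        * ((r*s:ℝ) + ((r^2*t:ℝ)) * Complex.I) := by
    rw [map_mul, Complex.conj_ofReal]
    push_cast
    ring
  rw [h2, he, one_mul]
  simp [← Complex.ofReal_pow]

lemma my_im_calc2 (z : ℂ) (r : ℝ) : ((starRingEnd ℂ) z * (r:ℂ)).im = -z.im * r := by
  simp [Complex.mul_im]

/-- Explicit momentum density of the gray soliton. -/
def myF (a b d x : ℝ) : ℝ :=
  d*a^3*b*(1 - Real.tanh (b*x)^2)^2/(d^2 + a^2*Real.tanh (b*x)^2)

/-- Antiderivative of `myF`. -/
def myH (a b d x : ℝ) : ℝ :=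
  Real.arctan (a * Real.tanh (b*x) / d) - a*d*Real.tanh (b*x)

lemma myH_hasDerivAt {a b d : ℝ} (ha : 0 < a) (hd : 0 < d) (had : a^2 + d^2 = 1) (x : ℝ) :
    HasDerivAt (myH a b d) (myF a b d x) x := by
  set t := Real.tanh (b*x) with htdef
  have ht := my_tanh_mul_hasDerivAt b x
  have h1 : HasDerivAt (fun y => a * Real.tanh (b*y) / d) (a * (b*(1 - t^2)) / d) x :=
    (ht.const_mul a).div_const d
  have h2 := h1.arctan
  have h3 : HasDerivAt (fun y => a*d*Real.tanh (b*y)) (a*d*(b*(1 - t^2))) x := ht.const_mul (a*d)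
  have h4 := h2.sub h3
  refine h4.congr_deriv (Eq.symm ?_)
  have hden : (0:ℝ) < d^2 + a^2 * t^2 := by positivity
  have e1 : 1 + (a*t/d)^2 = (d^2+a^2*t^2)/d^2 := by field_simp
  rw [e1]
  have h5 : 1/((d^2+a^2*t^2)/d^2) * (a * (b*(1-t^2)) / d) - a*d*(b*(1-t^2))
      = a*d*b*(1-t^2)*((1 - (d^2+a^2*t^2))/(d^2+a^2*t^2)) := by
    field_simp
  have h6 : 1 - (d^2+a^2*t^2) = a^2*(1-t^2) := by linear_combination (-1 : ℝ) * had
  rw [h5, h6, myF]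
  field_simp
  ring

lemma myF_nonneg {a b d : ℝ} (ha : 0 < a) (hb : 0 < b) (hd : 0 < d) (x : ℝ) :
    0 ≤ myF a b d x := by
  rw [myF]
  have hden : (0:ℝ) < d^2 + a^2 * Real.tanh (b*x)^2 := by positivity
  apply div_nonneg _ hden.le
  have h1 : (0:ℝ) ≤ d*a^3*b := by positivity
  exact mul_nonneg h1 (sq_nonneg _)

lemma myF_integral {a b d : ℝ} (ha : 0 < a) (hb : 0 < b) (hd : 0 < d) (had : a^2 + d^2 = 1) :
    ∫ x, myF a b d x = 2*(Real.arctan (a/d) - a*d) := by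
  have htop : Tendsto (myH a b d) atTop (𝓝 (Real.arctan (a * 1 / d) - a*d*1)) := by
    have h1 := my_tendsto_tanh_mul_atTop hb
    exact (Real.continuous_arctan.continuousAt.tendsto.comp
      ((h1.const_mul a).div_const d)).sub (h1.const_mul (a*d))
  have hbot : Tendsto (myH a b d) atBot (𝓝 (Real.arctan (a * (-1) / d) - a*d*(-1))) := by
    have h1 := my_tendsto_tanh_mul_atBot hb
    exact (Real.continuous_arctan.continuousAt.tendsto.comp
      ((h1.const_mul a).div_const d)).sub (h1.const_mul (a*d))
  rw [my_integral_of_antideriv (myH_hasDerivAt ha hd had) (myF_nonneg ha hb hd) hbot htop]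
  rw [show a * (-1)/d = -(a/d) by ring, Real.arctan_neg]
  ring

lemma my_grayMomentum_hasDerivAt {c : ℝ} (hc : 0 < c) (hc2 : c^2 < 2) :
    HasDerivAt grayMomentum (-Real.sqrt (2 - c ^ 2)) c := by
  set μ := Real.sqrt (2 - c^2) with hμdef
  have hμ : 0 < μ := Real.sqrt_pos.mpr (by linarith)
  have hμsq : μ^2 = 2 - c^2 := Real.sq_sqrt (by linarith)
  have h1 : HasDerivAt (fun y : ℝ => 2 - y^2) (-(2*c^1)) c := by
    simpa using (hasDerivAt_pow 2 c).const_sub 2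
  have hsqrt : HasDerivAt (fun y : ℝ => Real.sqrt (2 - y^2)) (-(2*c^1)/(2*μ)) c :=
    h1.sqrt (by rw [← hμsq]; positivity)
  have hq : HasDerivAt (fun y : ℝ => y / Real.sqrt (2 - y^2))
      ((1*μ - c*(-(2*c^1)/(2*μ)))/μ^2) c := (hasDerivAt_id c).div hsqrt hμ.ne'
  have harc := hq.arctan
  have hlin : HasDerivAt (fun y : ℝ => y/2 * Real.sqrt (2 - y^2))
      ((1/2)*μ + c/2*(-(2*c^1)/(2*μ))) c := by
    have := ((hasDerivAt_id c).div_const 2).mul hsqrt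
    simp at this ⊢; exact this
  have htot := ((hasDerivAt_const c (π/2)).sub harc).sub hlin
  have hfun : grayMomentum = fun y : ℝ =>
      π/2 - Real.arctan (y / Real.sqrt (2 - y^2)) - y/2 * Real.sqrt (2 - y^2) := by
    funext y
    rw [grayMomentum]
  rw [hfun]
  refine htot.congr_deriv (Eq.symm ?_)
  have hd : 1 + (c/μ)^2 = 2/μ^2 := by
    rw [div_pow]
    field_simp
    linarith [hμsq]
  rw [hd]
  field_simp
  ring_nf

lemma my_div_lt_arctan {t : ℝ} (ht : 0 < t) : t/(1+t^2) < Real.arctan t := by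
  have key : StrictMonoOn (fun s => Real.arctan s - s/(1+s^2)) (Ici 0) := by
    apply strictMonoOn_of_deriv_pos (convex_Ici 0)
    · apply ContinuousOn.sub Real.continuous_arctan.continuousOn
      apply ContinuousOn.div continuous_id.continuousOn (by fun_prop)
      intro s _
      positivity
    · intro s hs
      rw [interior_Ici] at hs
      have h1 : HasDerivAt (fun s : ℝ => Real.arctan s - s/(1+s^2))
          (1/(1+s^2) - (1*(1+s^2) - s*(2*s^1))/(1+s^2)^2) s := by
        have hd : (0:ℝ) < 1 + s^2 := by positivity
        exact (Real.hasDerivAt_arctan s).sub ((hasDerivAt_id s).div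
          (by simpa using ((hasDerivAt_pow 2 s).const_add 1)) hd.ne')
      rw [h1.deriv]
      have hd : (0:ℝ) < 1 + s^2 := by positivity
      rw [show 1/(1+s^2) - (1*(1+s^2) - s*(2*s^1))/(1+s^2)^2 = 2*s^2/(1+s^2)^2 by
        field_simp; ring]
      have hs' : 0 < s := hs
      positivity
  have h0 := key (self_mem_Ici) (mem_Ici.mpr ht.le) ht
  simpa using h0

lemma my_grayMomentum_mapsTo {y : ℝ} (hy : 0 < y) (hy2 : y^2 < 2) :
    grayMomentum y ∈ Ioo 0 (π/2) := by
  set μ := Real.sqrt (2 - y^2) with hμdef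
  have hμ : 0 < μ := Real.sqrt_pos.mpr (by linarith)
  have hμsq : μ^2 = 2 - y^2 := Real.sq_sqrt (by linarith)
  constructor
  · have harct : Real.arctan (μ/y) = π/2 - Real.arctan (y/μ) := by
      rw [show μ/y = (y/μ)⁻¹ by rw [inv_div]]
      exact Real.arctan_inv_of_pos (by positivity)
    have hkey := my_div_lt_arctan (t := μ/y) (by positivity)
    have heq : (μ/y)/(1+(μ/y)^2) = y*μ/2 := by
      rw [div_pow]
      rw [show 1 + μ^2/y^2 = (y^2+μ^2)/y^2 by field_simp]
      rw [hμsq]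
      rw [show y^2 + (2-y^2) = 2 by ring]
      field_simp
    rw [heq, harct] at hkey
    rw [grayMomentum, ← hμdef]
    linarith
  · rw [grayMomentum, ← hμdef]
    have h1 : 0 < Real.arctan (y/μ) := by
      simpa using Real.arctan_strictMono (show (0:ℝ) < y/μ by positivity)
    nlinarith [hμ, hy]

lemma my_grayMomentum_strictAntiOn : StrictAntiOn grayMomentum (Ioo 0 (Real.sqrt 2)) := by
  have hs2 : (Real.sqrt 2)^2 = 2 := Real.sq_sqrt (by norm_num)
  have hd : ∀ y ∈ Ioo (0:ℝ) (Real.sqrt 2), HasDerivAt grayMomentum (-Real.sqrt (2 - y^2)) y := by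
    intro y hy
    exact my_grayMomentum_hasDerivAt hy.1 (by nlinarith [hy.2, hy.1])
  apply strictAntiOn_of_deriv_neg (convex_Ioo _ _)
  · intro y hy
    exact (hd y hy).continuousAt.continuousWithinAt
  · intro y hy
    rw [interior_Ioo] at hy
    rw [(hd y hy).deriv]
    have : (0:ℝ) < Real.sqrt (2 - y^2) := Real.sqrt_pos.mpr (by nlinarith [hy.2, hy.1])
    linarith

lemma my_grayMomentum_zero : grayMomentum 0 = π / 2 := by
  rw [grayMomentum]
  norm_num

lemma my_grayMomentum_continuousOn {y₀ : ℝ} (hy₀ : y₀ < Real.sqrt 2) :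
    ContinuousOn grayMomentum (Icc 0 y₀) := by
  have hs2 : (Real.sqrt 2)^2 = 2 := Real.sq_sqrt (by norm_num)
  have hpos : ∀ y ∈ Icc (0:ℝ) y₀, (0:ℝ) < 2 - y^2 := by
    intro y hy
    have h1 : 0 ≤ y := hy.1
    have h2 : y ≤ y₀ := hy.2
    nlinarith [Real.sqrt_nonneg 2]
  have hsqrt : ContinuousOn (fun y : ℝ => Real.sqrt (2 - y^2)) (Icc 0 y₀) := by fun_prop
  apply ContinuousOn.sub
  apply ContinuousOn.sub continuousOn_const
  · exact Real.continuous_arctan.comp_continuousOn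
      (ContinuousOn.div continuous_id.continuousOn hsqrt
        (fun y hy => (Real.sqrt_pos.mpr (hpos y hy)).ne'))
  · exact ContinuousOn.mul (by fun_prop) hsqrt

lemma my_grayMomentum_tendsto : Tendsto grayMomentum (𝓝[<] (Real.sqrt 2)) (𝓝 0) := by
  have hs2 : (Real.sqrt 2)^2 = 2 := Real.sq_sqrt (by norm_num)
  have hs2' : (0:ℝ) < Real.sqrt 2 := Real.sqrt_pos.mpr (by norm_num)
  have hsq0 : Tendsto (fun y : ℝ => Real.sqrt (2 - y^2)) (𝓝[<] (Real.sqrt 2)) (𝓝 0) := by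
    have hcont : Continuous (fun y : ℝ => Real.sqrt (2 - y^2)) := by fun_prop
    have := hcont.tendsto (Real.sqrt 2)
    rw [hs2] at this
    norm_num at this
    exact this.mono_left nhdsWithin_le_nhds
  have hev : ∀ᶠ y in 𝓝[<] (Real.sqrt 2), (0:ℝ) < Real.sqrt (2 - y^2) := by
    filter_upwards [Ioo_mem_nhdsLT_of_mem (show Real.sqrt 2 ∈ Ioc (0:ℝ) (Real.sqrt 2)
      from ⟨hs2', le_refl _⟩)] with y hy
    exact Real.sqrt_pos.mpr (by nlinarith [hy.1, hy.2])
  have hsq0' : Tendsto (fun y : ℝ => Real.sqrt (2 - y^2)) (𝓝[<] (Real.sqrt 2)) (𝓝[>] 0) :=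
    tendsto_nhdsWithin_of_tendsto_nhds_of_eventually_within _ hsq0 hev
  have hinv : Tendsto (fun y : ℝ => (Real.sqrt (2 - y^2))⁻¹) (𝓝[<] (Real.sqrt 2)) atTop :=
    tendsto_inv_nhdsGT_zero.comp hsq0'
  have hid : Tendsto (fun y : ℝ => y) (𝓝[<] (Real.sqrt 2)) (𝓝 (Real.sqrt 2)) :=
    Filter.tendsto_id.mono_left nhdsWithin_le_nhds
  have hdiv : Tendsto (fun y : ℝ => y / Real.sqrt (2 - y^2)) (𝓝[<] (Real.sqrt 2)) atTop := by
    simp only [div_eq_mul_inv]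
    exact Filter.Tendsto.pos_mul_atTop hs2' hid hinv
  have harc : Tendsto (fun y : ℝ => Real.arctan (y / Real.sqrt (2 - y^2)))
      (𝓝[<] (Real.sqrt 2)) (𝓝 (π/2)) :=
    (Real.tendsto_arctan_atTop.mono_right nhdsWithin_le_nhds).comp hdiv
  have hterm : Tendsto (fun y : ℝ => y/2 * Real.sqrt (2 - y^2)) (𝓝[<] (Real.sqrt 2))
      (𝓝 (Real.sqrt 2/2 * 0)) := (hid.div_const 2).mul hsq0
  have := (tendsto_const_nhds (x := π/2) (f := 𝓝[<] (Real.sqrt 2))).sub harc |>.sub hterm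
  norm_num at this
  exact this.congr (fun y => by rw [grayMomentum])

lemma my_grayMomentum_bijOn :
    Set.BijOn grayMomentum (Ioo 0 (Real.sqrt 2)) (Ioo 0 (π / 2)) := by
  have hs2 : (Real.sqrt 2)^2 = 2 := Real.sq_sqrt (by norm_num)
  refine ⟨?_, my_grayMomentum_strictAntiOn.injOn, ?_⟩
  · intro y hy
    exact my_grayMomentum_mapsTo hy.1 (by nlinarith [hy.1, hy.2])
  · intro z hz
    obtain ⟨hz0, hzπ⟩ := hz
    have hev1 : ∀ᶠ y in 𝓝[<] (Real.sqrt 2), grayMomentum y < z :=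
      my_grayMomentum_tendsto.eventually (eventually_lt_nhds hz0)
    have hev2 : ∀ᶠ y in 𝓝[<] (Real.sqrt 2), y ∈ Ioo (0:ℝ) (Real.sqrt 2) :=
      Ioo_mem_nhdsLT_of_mem ⟨Real.sqrt_pos.mpr (by norm_num), le_refl _⟩
    obtain ⟨y₀, hy₀z, hy₀⟩ := (hev1.and hev2).exists
    have hcont := my_grayMomentum_continuousOn hy₀.2
    have hsub := intermediate_value_Icc' hy₀.1.le hcont
    have hzmem : z ∈ Icc (grayMomentum y₀) (grayMomentum 0) := by
      rw [my_grayMomentum_zero]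
      exact ⟨hy₀z.le, hzπ.le⟩
    obtain ⟨x, hx, hxz⟩ := hsub hzmem
    refine ⟨x, ⟨?_, lt_of_le_of_lt hx.2 hy₀.2⟩, hxz⟩
    rcases eq_or_lt_of_le hx.1 with heq | hlt
    · exfalso
      rw [← heq] at hxz
      rw [my_grayMomentum_zero] at hxz
      linarith
    · exact hlt


set_option maxHeartbeats 1000000 in
/-- **Energy and renormalized momentum of the gray solitons**: for `0 < c < √2`,
`𝔳_c` vanishes nowhere, `p(𝔳_c) = π/2 - arctan(c/√(2-c²)) - (c/2)√(2-c²)`,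
`E(𝔳_c) = (2-c²)^{3/2}/3`, `(d/dc) p(𝔳_c) = -√(2-c²)`, and `c ↦ p(𝔳_c)` is a decreasing
diffeomorphism from `(0, √2)` onto `(0, π/2)`. -/
theorem gray_soliton_energy_momentum (c : ℝ) (hc : 0 < c) (hc' : c < Real.sqrt 2) :
    (∀ x : ℝ, grayProfile c x ≠ 0) ∧
    (∀ ρ φ : ℝ → ℝ, (∀ x, 0 < ρ x) → Differentiable ℝ ρ → Differentiable ℝ φ →
      (∀ x, grayProfile c x = (ρ x : ℂ) * Complex.exp (φ x * Complex.I)) →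
      (1 / 2) * ∫ x, (ρ x ^ 2 - 1) * deriv φ x = grayMomentum c) ∧
    energy (grayProfile c) = (Real.sqrt (2 - c ^ 2)) ^ 3 / 3 ∧
    HasDerivAt grayMomentum (-Real.sqrt (2 - c ^ 2)) c ∧
    StrictAntiOn grayMomentum (Ioo 0 (Real.sqrt 2)) ∧
    Set.BijOn grayMomentum (Ioo 0 (Real.sqrt 2)) (Ioo 0 (π / 2)) := by
  have hs2 : (Real.sqrt 2)^2 = 2 := Real.sq_sqrt (by norm_num)
  have hs2' : (0:ℝ) < Real.sqrt 2 := Real.sqrt_pos.mpr (by norm_num)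
  have hc2 : c^2 < 2 := by nlinarith
  set μ := Real.sqrt (2 - c^2) with hμdef
  have hμ : 0 < μ := Real.sqrt_pos.mpr (by linarith)
  have hμsq : μ^2 = 2 - c^2 := Real.sq_sqrt (by linarith)
  set a := Real.sqrt ((2 - c^2)/2) with hadef
  have ha2 : a^2 = (2 - c^2)/2 := Real.sq_sqrt (by linarith)
  have ha : 0 < a := Real.sqrt_pos.mpr (by linarith)
  set b := μ/2 with hbdef
  have hb : 0 < b := by positivity
  set d := c / Real.sqrt 2 with hddef
  have hd : 0 < d := by positivity
  have hd2 : d^2 = c^2/2 := by rw [hddef, div_pow, hs2]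
  have had : a^2 + d^2 = 1 := by rw [ha2, hd2]; ring
  have hveq : grayProfile c = fun x => ((a * Real.tanh (b*x) : ℝ) : ℂ) + Complex.I * (d : ℝ) :=
    my_grayProfile_eq c
  refine ⟨?_, ?_, ?_, my_grayMomentum_hasDerivAt hc hc2,
    my_grayMomentum_strictAntiOn, my_grayMomentum_bijOn⟩
  · -- nonvanishing
    intro x hx
    have h2 : (grayProfile c x).im = d := by
      rw [hveq]; exact my_im_mk _ _
    rw [hx, Complex.zero_im] at h2
    exact absurd h2.symm hd.ne'
  · -- momentum
    intro ρ φ hρpos hρd hφd hv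
    have hpt : ∀ x, (ρ x ^ 2 - 1) * deriv φ x = myF a b d x := by
      intro x
      set t := Real.tanh (b*x) with htdef
      have hvd : HasDerivAt (grayProfile c) ((a * (b * (1 - t^2)) : ℝ) : ℂ) x := by
        rw [hveq]; exact my_gp_hasDerivAt a b d x
      have hfun : (fun x => (ρ x : ℂ) * Complex.exp (φ x * Complex.I)) = grayProfile c :=
        funext fun x => (hv x).symm
      have hw0 : HasDerivAt (fun x => (ρ x : ℂ) * Complex.exp (φ x * Complex.I))
          (((deriv ρ x : ℝ) : ℂ) * Complex.exp (φ x * Complex.I)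
            + (ρ x : ℂ) * (Complex.exp (φ x * Complex.I)
              * (((deriv φ x : ℝ) : ℂ) * Complex.I))) x := by
        have h1 : HasDerivAt (fun x => ((ρ x : ℝ) : ℂ)) ((deriv ρ x : ℝ) : ℂ) x :=
          HasDerivAt.ofReal_comp (hρd x).hasDerivAt
        have h2 : HasDerivAt (fun x => ((φ x : ℝ) : ℂ) * Complex.I)
            (((deriv φ x : ℝ) : ℂ) * Complex.I) x :=
          (HasDerivAt.ofReal_comp (hφd x).hasDerivAt).mul_const Complex.I
        exact h1.mul h2.cexp
      have hw : HasDerivAt (fun x => (ρ x : ℂ) * Complex.exp (φ x * Complex.I))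
          (((deriv ρ x : ℝ) : ℂ) * Complex.exp (φ x * Complex.I)
            + (ρ x : ℂ) * (((deriv φ x : ℝ) : ℂ) * Complex.I
              * Complex.exp (φ x * Complex.I))) x := by
        convert hw0 using 1
        ring
      rw [hfun] at hw
      have hD := hw.unique hvd
      have him : ρ x^2 * deriv φ x = -(d * (a * (b * (1 - t^2)))) := by
        have h5 := congrArg (fun z => ((starRingEnd ℂ) (grayProfile c x) * z).im) hD
        rw [hv x, my_im_calc (ρ x) (deriv ρ x) (deriv φ x) (φ x), ← hv x,
          my_im_calc2 (grayProfile c x) (a * (b * (1 - t^2)))] at h5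
        have him2 : (grayProfile c x).im = d := by rw [hveq]; exact my_im_mk _ _
        rw [him2] at h5
        rw [h5]; ring
      have hρsq : ρ x^2 = a^2 * t^2 + d^2 := by
        have h1 : ‖grayProfile c x‖ = ρ x := by
          rw [hv x, norm_mul, Complex.norm_real, Real.norm_eq_abs,
            abs_of_pos (hρpos x), Complex.norm_exp_ofReal_mul_I, mul_one]
        have h2 : ‖grayProfile c x‖^2 = (a * t)^2 + d^2 := by
          rw [hveq]; exact my_normsq _ _
        rw [← h1, h2]; ring
      have hρx2 : (0:ℝ) < ρ x^2 := pow_pos (hρpos x) 2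
      have hden : (0:ℝ) < d^2 + a^2 * t^2 := by positivity
      have hφ' : deriv φ x = -(d * (a * (b * (1 - t^2)))) / ρ x^2 := by
        rw [eq_div_iff hρx2.ne']
        linear_combination him
      have hfac : ρ x^2 - 1 = -(a^2*(1 - t^2)) := by
        rw [hρsq]; linear_combination had
      rw [hφ', hfac, hρsq, myF]
      field_simp
      ring
    rw [show (fun x => (ρ x ^ 2 - 1) * deriv φ x) = fun x => myF a b d x from funext hpt]
    rw [myF_integral ha hb hd had]
    have haμ : a = μ/Real.sqrt 2 := by
      rw [hadef, show (2-c^2)/2 = (μ/Real.sqrt 2)^2 by rw [div_pow, hμsq, hs2]]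
      exact Real.sqrt_sq (by positivity)
    have had' : a / d = μ / c := by rw [haμ, hddef]; field_simp
    have hadprod : a * d = μ * c / 2 := by
      rw [haμ, hddef]
      field_simp
      rw [hs2]
    have harct : Real.arctan (a/d) = π/2 - Real.arctan (c/μ) := by
      rw [had', show μ/c = (c/μ)⁻¹ by rw [inv_div]]
      exact Real.arctan_inv_of_pos (by positivity)
    rw [grayMomentum, harct, hadprod, ← hμdef]
    ring
  · -- energy
    have hderiv : ∀ x, deriv (grayProfile c) x = ((a * (b * (1 - Real.tanh (b*x)^2)) : ℝ) : ℂ) := by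
      intro x
      rw [hveq]
      exact (my_gp_hasDerivAt a b d x).deriv
    have hsech := my_sech4 hb
    have e1 : (∫ x, ‖deriv (grayProfile c) x‖ ^ 2) = (a*b)^2 * (4/(3*b)) := by
      have h : (fun x => ‖deriv (grayProfile c) x‖ ^ 2)
          = fun x => (a*b)^2 * (1 - Real.tanh (b*x)^2)^2 := by
        funext x
        rw [hderiv x, Complex.norm_real, Real.norm_eq_abs, sq_abs]
        ring
      rw [h, integral_const_mul, hsech.2]
    have e2 : (∫ x, ((1:ℝ) - ‖grayProfile c x‖ ^ 2) ^ 2) = a^4 * (4/(3*b)) := by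
      have h : (fun x => ((1:ℝ) - ‖grayProfile c x‖ ^ 2) ^ 2)
          = fun x => a^4 * (1 - Real.tanh (b*x)^2)^2 := by
        funext x
        rw [hveq]
        simp only []
        rw [my_normsq]
        have h2 : 1 - ((a * Real.tanh (b*x))^2 + d^2) = a^2 * (1 - Real.tanh (b*x)^2) := by
          nlinarith [had]
        rw [h2]
        ring
      rw [h, integral_const_mul, hsech.2]
    rw [energy, e1, e2]
    have ha2' : a^2 = μ^2/2 := by rw [ha2, hμsq]
    have h4 : a^4 = (μ^2/2)^2 := by nlinarith [ha2']
    have h5 : (a*b)^2 = (μ^2/2)*b^2 := by rw [mul_pow, ha2']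
    rw [h4, h5, hbdef]
    field_simp
    ring
end
end
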